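/- Let P be a finite set of prime numbers and let M ⊆ ℕ be the set of positive integers all of whose prime factors belong to P (with 1 ∈ M). Let f : ℝ → ℂ be a Schwartz function. Then for every real s the sum and the integrals below converge absolutely, and ∫₀^∞ ( ∑_{m ∈ M} f(m u) ) u^{1/2 - i s} (du/u) = ( ∏_{p ∈ P} (1 - p^{-(1/2 - i s)})^{-1} ) · ∫₀^∞ f(u) u^{1/2 - i s} (du/u). -/

import Mathlib

open MeasureTheory Complex

open Set Filter Asymptotics in
noncomputable def stmt15chi (w : ℂ) : ℕ →* ℂ where
  toFun n := (n : ℂ) ^ (-w)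
  map_one' := by simp
  map_mul' m n := by
    have hm : ((m : ℂ)) = ((m : ℝ) : ℂ) := by norm_cast
    have hn : ((n : ℂ)) = ((n : ℝ) : ℂ) := by norm_cast
    simp only [Nat.cast_mul, hm, hn]
    exact mul_cpow_ofReal_nonneg (Nat.cast_nonneg m) (Nat.cast_nonneg n) (-w)

lemma stmt15chi_norm {w : ℂ} {n : ℕ} (hn : 0 < n) :
    ‖stmt15chi w n‖ = (n : ℝ) ^ (-w.re) := by
  have h : ((n : ℂ)) = ((n : ℝ) : ℂ) := by norm_cast
  show ‖(n : ℂ) ^ (-w)‖ = _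
  rw [h, norm_cpow_eq_rpow_re_of_pos (by exact_mod_cast hn), Complex.neg_re]

lemma stmt15_ennnorm_tsum_le {ι : Type*} {f : ι → ℂ} :
    (‖∑' i, f i‖₊ : ENNReal) ≤ ∑' i, (‖f i‖₊ : ENNReal) := by
  by_cases h : Summable fun i => ‖f i‖₊
  · rw [← ENNReal.coe_tsum h]
    exact_mod_cast nnnorm_tsum_le h
  · have : ∑' i, (‖f i‖₊ : ENNReal) = ⊤ := by
      by_contra hne
      exact h (ENNReal.tsum_coe_ne_top_iff_summable.mp hne)
    simp [this]

open Set Filter Asymptotics in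
/-- semilocal Euler product identity for the Mellin transform of a
Schwartz function summed over the multiplicative monoid generated by a finite set of
primes. -/
theorem stmt15 (P : Finset ℕ) (hP : ∀ p ∈ P, Nat.Prime p)
    (M : Set ℕ) (hM : M = {m : ℕ | 0 < m ∧ ∀ q : ℕ, Nat.Prime q → q ∣ m → q ∈ P})
    (f : SchwartzMap ℝ ℂ) (s : ℝ) :
    (∀ u : ℝ, 0 < u → Summable fun m : M => ‖f ((m : ℕ) * u)‖)
    ∧ IntegrableOn
        (fun u : ℝ => (∑' m : M, f ((m : ℕ) * u)) *
          (u : ℂ) ^ ((1 : ℂ) / 2 - Complex.I * (s : ℂ)) / (u : ℂ))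
        (Set.Ioi (0 : ℝ))
    ∧ IntegrableOn
        (fun u : ℝ => f u * (u : ℂ) ^ ((1 : ℂ) / 2 - Complex.I * (s : ℂ)) / (u : ℂ))
        (Set.Ioi (0 : ℝ))
    ∧ (∫ u in Set.Ioi (0 : ℝ),
          (∑' m : M, f ((m : ℕ) * u)) *
            (u : ℂ) ^ ((1 : ℂ) / 2 - Complex.I * (s : ℂ)) / (u : ℂ))
        = (∏ p ∈ P, (1 - (p : ℂ) ^ (-((1 : ℂ) / 2 - Complex.I * (s : ℂ))))⁻¹) *
            ∫ u in Set.Ioi (0 : ℝ),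
              f u * (u : ℂ) ^ ((1 : ℂ) / 2 - Complex.I * (s : ℂ)) / (u : ℂ) := by
  subst hM
  have hMF : {m : ℕ | 0 < m ∧ ∀ q : ℕ, Nat.Prime q → q ∣ m → q ∈ P} = Nat.factoredNumbers P := by
    ext m
    constructor
    · rintro ⟨h1, h2⟩
      exact ⟨h1.ne', fun p hp => h2 p (Nat.prime_of_mem_primeFactorsList hp)
        (Nat.dvd_of_mem_primeFactorsList hp)⟩
    · rintro ⟨h1, h2⟩
      exact ⟨Nat.pos_of_ne_zero h1,
        fun q hq hdvd => h2 q ((Nat.mem_primeFactorsList h1).mpr ⟨hq, hdvd⟩)⟩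
  rw [hMF]
  set z : ℂ := (1 : ℂ) / 2 - Complex.I * (s : ℂ) with hz
  have hσ : z.re = 1 / 2 := by simp [hz]
  -- Schwartz decay bounds
  obtain ⟨C0, hC0pos, hC0⟩ := f.decay 0 0
  obtain ⟨C1, hC1pos, hC1⟩ := f.decay 1 0
  obtain ⟨C2, hC2pos, hC2⟩ := f.decay 2 0
  simp only [norm_iteratedFDeriv_zero, pow_zero, one_mul, pow_one] at hC0 hC1 hC2
  -- basic summability of 1/m^2 over the subtype
  have hsum2 : Summable (fun m : Nat.factoredNumbers P => (((m : ℕ) : ℝ) ^ 2)⁻¹) := by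
    have : Summable (fun n : ℕ => ((n : ℝ) ^ 2)⁻¹) := by
      simpa [one_div] using Real.summable_one_div_nat_pow.mpr (by norm_num : 1 < 2)
    exact this.subtype _
  -- pointwise decay bound
  have hbound : ∀ m : ℕ, 0 < m → ∀ u : ℝ, 0 < u →
      ‖f ((m : ℝ) * u)‖ ≤ C2 / u ^ 2 * (((m : ℕ) : ℝ) ^ 2)⁻¹ := by
    intro m hm u hu
    have hm' : (0 : ℝ) < (m : ℝ) := by exact_mod_cast hm
    have hmu : 0 < (m : ℝ) * u := by positivity
    have h2 := hC2 ((m : ℝ) * u)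
    rw [Real.norm_eq_abs, abs_of_pos hmu] at h2
    have heq : C2 / u ^ 2 * (((m : ℕ) : ℝ) ^ 2)⁻¹ = C2 / ((m : ℝ) * u) ^ 2 := by
      field_simp
    rw [heq, le_div_iff₀ (by positivity)]
    nlinarith [norm_nonneg (f ((m : ℝ) * u))]
  -- Part 1: summability
  have part1 : ∀ u : ℝ, 0 < u →
      Summable fun m : Nat.factoredNumbers P => ‖f ((m : ℕ) * u)‖ := by
    intro u hu
    refine ((hsum2.mul_left (C2 / u ^ 2)).of_nonneg_of_le (fun _ => norm_nonneg _) ?_)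
    intro m
    exact hbound m (Nat.pos_of_ne_zero m.2.1) u hu
  -- Mellin convergence of f at z
  have hMC : MellinConvergent (fun x : ℝ => f x) z := by
    refine mellinConvergent_of_isBigO_rpow (a := 1) (b := 0) ?_ ?_ ?_ ?_ ?_
    · exact (f.continuous.locallyIntegrable).locallyIntegrableOn _
    · rw [isBigO_iff]
      refine ⟨C1, ?_⟩
      filter_upwards [eventually_ge_atTop (1 : ℝ)] with x hx
      have h := hC1 x
      have hx0 : (0 : ℝ) < x := lt_of_lt_of_le one_pos hx
      rw [Real.norm_eq_abs, abs_of_pos hx0] at h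
      rw [Real.norm_eq_abs (x ^ (-1 : ℝ)), Real.rpow_neg_one, abs_of_pos (inv_pos.mpr hx0),
        ← div_eq_mul_inv, le_div_iff₀ hx0]
      linarith
    · rw [hσ]; norm_num
    · have h1 : (fun x : ℝ => x ^ (-(0 : ℝ))) = fun _ : ℝ => (1 : ℝ) := by
        funext x; rw [neg_zero, Real.rpow_zero]
      rw [h1, isBigO_iff]
      exact ⟨C0, by filter_upwards with x; simpa using hC0 x⟩
    · rw [hσ]; norm_num
  -- Euler product over the factored numbers
  have hprime : ∀ {p : ℕ}, p.Prime → ‖stmt15chi z p‖ < 1 := by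
    intro p hp
    rw [stmt15chi_norm hp.pos, hσ]
    have h1 : (1 : ℝ) < (p : ℝ) := by exact_mod_cast hp.one_lt
    exact Real.rpow_lt_one_of_one_lt_of_neg h1 (by norm_num)
  obtain ⟨hEPsum, hEPhas⟩ :=
    EulerProduct.summable_and_hasSum_factoredNumbers_prod_filter_prime_geometric
      (f := stmt15chi z) hprime P
  rw [Finset.filter_true_of_mem hP] at hEPhas
  -- the family of functions
  have hposm : ∀ m : Nat.factoredNumbers P, (0 : ℝ) < ((m : ℕ) : ℝ) := fun m => by
    exact_mod_cast Nat.pos_of_ne_zero m.2.1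
  have hInt : ∀ m : Nat.factoredNumbers P,
      IntegrableOn (fun u : ℝ => (u : ℂ) ^ (z - 1) * f ((m : ℕ) * u)) (Ioi 0) := by
    intro m
    have := (MellinConvergent.comp_mul_left (f := fun x : ℝ => f x) (s := z) (hposm m)).mpr hMC
    simpa only [MellinConvergent, smul_eq_mul] using this
  -- computation of the integral of norms
  have hnormint : ∀ m : Nat.factoredNumbers P,
      (∫ u in Ioi (0:ℝ), ‖(u : ℂ) ^ (z - 1) * f ((m : ℕ) * u)‖) =
        (((m : ℕ) : ℝ)) ^ (-(1/2 : ℝ)) * ∫ u in Ioi (0:ℝ), u ^ ((1/2 : ℝ) - 1) * ‖f u‖ := by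
    intro m
    set c : ℝ := ((m : ℕ) : ℝ) with hcdef
    have hc : (0 : ℝ) < c := hposm m
    have hre : (z - 1).re = (1/2 : ℝ) - 1 := by rw [Complex.sub_re, hσ, Complex.one_re]
    have step1 : ∀ u ∈ Ioi (0:ℝ), ‖(u : ℂ) ^ (z - 1) * f (c * u)‖
        = c ^ (1 - (1/2 : ℝ)) * ((fun v => v ^ ((1/2 : ℝ) - 1) * ‖f v‖) (c * u)) := by
      intro u hu
      have hu0 : (0 : ℝ) < u := hu
      rw [norm_mul, norm_cpow_eq_rpow_re_of_pos hu0, hre]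
      simp only
      rw [Real.mul_rpow hc.le hu0.le, ← mul_assoc, ← mul_assoc, ← Real.rpow_add hc]
      norm_num
    rw [setIntegral_congr_fun measurableSet_Ioi step1, integral_const_mul,
      integral_comp_mul_left_Ioi (fun v => v ^ ((1/2 : ℝ) - 1) * ‖f v‖) 0 hc, mul_zero,
      smul_eq_mul, ← mul_assoc]
    congr 1
    rw [← Real.rpow_neg_one c, ← Real.rpow_add hc]
    norm_num
  -- summability of the integrals of norms
  have hIntNormSum : Summable (fun m : Nat.factoredNumbers P =>
      ∫ u in Ioi (0:ℝ), ‖(u : ℂ) ^ (z - 1) * f ((m : ℕ) * u)‖) := by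
    refine Summable.congr (hEPsum.mul_right (∫ u in Ioi (0:ℝ), u ^ ((1/2 : ℝ) - 1) * ‖f u‖)) ?_
    intro m
    rw [stmt15chi_norm (Nat.pos_of_ne_zero m.2.1), hσ, hnormint m]
  -- interchange of sum and integral
  have hHasSum :
      HasSum (fun m : Nat.factoredNumbers P =>
          ∫ u in Ioi (0:ℝ), (u : ℂ) ^ (z - 1) * f ((m : ℕ) * u))
        (∫ u in Ioi (0:ℝ), ∑' m : Nat.factoredNumbers P, (u : ℂ) ^ (z - 1) * f ((m : ℕ) * u)) :=
    hasSum_integral_of_summable_integral_norm hInt hIntNormSum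
  -- value of each integral
  have hval : ∀ m : Nat.factoredNumbers P,
      (∫ u in Ioi (0:ℝ), (u : ℂ) ^ (z - 1) * f ((m : ℕ) * u)) =
        stmt15chi z m * mellin (fun x : ℝ => f x) z := by
    intro m
    have h := mellin_comp_mul_left (fun x : ℝ => f x) z (hposm m)
    have hcast : ((((m : ℕ) : ℝ) : ℂ)) = ((m : ℕ) : ℂ) := by norm_cast
    calc (∫ u in Ioi (0:ℝ), (u : ℂ) ^ (z - 1) * f ((m : ℕ) * u))
        = mellin (fun t => f (((m : ℕ) : ℝ) * t)) z := by
          simp only [mellin, smul_eq_mul]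
      _ = stmt15chi z m * mellin (fun x : ℝ => f x) z := by
          rw [h, smul_eq_mul, hcast]; rfl
  have hHasSum2 :
      HasSum (fun m : Nat.factoredNumbers P =>
          ∫ u in Ioi (0:ℝ), (u : ℂ) ^ (z - 1) * f ((m : ℕ) * u))
        ((∏ p ∈ P, (1 - stmt15chi z p)⁻¹) * mellin (fun x : ℝ => f x) z) := by
    have h2 := hEPhas.mul_right (mellin (fun x : ℝ => f x) z)
    simp only [hval]
    exact h2
  have hmain : (∫ u in Ioi (0:ℝ), ∑' m : Nat.factoredNumbers P,
        (u : ℂ) ^ (z - 1) * f ((m : ℕ) * u))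
      = (∏ p ∈ P, (1 - stmt15chi z p)⁻¹) * mellin (fun x : ℝ => f x) z :=
    hHasSum.unique hHasSum2
  -- pointwise identification of the integrands
  have hEq1 : ∀ u ∈ Ioi (0:ℝ),
      (∑' m : Nat.factoredNumbers P, f ((m : ℕ) * u)) * (u : ℂ) ^ z / (u : ℂ)
        = ∑' m : Nat.factoredNumbers P, (u : ℂ) ^ (z - 1) * f ((m : ℕ) * u) := by
    intro u hu
    have hu0 : (0 : ℝ) < u := hu
    have huC : (u : ℂ) ≠ 0 := by exact_mod_cast hu0.ne'
    have h1 : (u : ℂ) ^ (z - 1) = (u : ℂ) ^ z / u := by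
      rw [Complex.cpow_sub _ _ huC, Complex.cpow_one]
    rw [tsum_mul_left, h1]
    ring
  have hEq2 : ∀ u ∈ Ioi (0:ℝ),
      f u * (u : ℂ) ^ z / (u : ℂ) = (u : ℂ) ^ (z - 1) • f u := by
    intro u hu
    have huC : (u : ℂ) ≠ 0 := by exact_mod_cast (ne_of_gt (by exact hu : (0:ℝ) < u))
    have h1 : (u : ℂ) ^ (z - 1) = (u : ℂ) ^ z / u := by
      rw [Complex.cpow_sub _ _ huC, Complex.cpow_one]
    rw [smul_eq_mul, h1]
    ring
  -- integrability of the summed function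
  have hcont : ContinuousOn
      (fun u : ℝ => ∑' m : Nat.factoredNumbers P, (f (((m : ℕ) : ℝ) * u) : ℂ)) (Ioi 0) := by
    intro u₀ hu₀
    have hu₀' : (0 : ℝ) < u₀ := hu₀
    have hhalf : (0 : ℝ) < u₀ / 2 := by linarith
    have hco : ContinuousOn
        (fun u : ℝ => ∑' m : Nat.factoredNumbers P, (f (((m : ℕ) : ℝ) * u) : ℂ))
        (Ioi (u₀ / 2)) := by
      refine continuousOn_tsum (fun m => ?_) (hsum2.mul_left (C2 / (u₀ / 2) ^ 2)) ?_
      · exact (f.continuous.comp (continuous_const.mul continuous_id)).continuousOn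
      · intro m u hu
        have hu' : (0 : ℝ) < u := lt_trans hhalf hu
        refine (hbound m (Nat.pos_of_ne_zero m.2.1) u hu').trans ?_
        have h2 : C2 / u ^ 2 ≤ C2 / (u₀ / 2) ^ 2 := by
          gcongr
          exact le_of_lt hu
        exact mul_le_mul_of_nonneg_right h2 (by positivity)
    exact (hco.continuousAt (Ioi_mem_nhds (by linarith))).continuousWithinAt
  have hT : IntegrableOn (fun u : ℝ =>
      ∑' m : Nat.factoredNumbers P, (u : ℂ) ^ (z - 1) * f ((m : ℕ) * u)) (Ioi 0) := by
    constructor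
    · have heq : (fun u : ℝ =>
          ∑' m : Nat.factoredNumbers P, (u : ℂ) ^ (z - 1) * f ((m : ℕ) * u))
          = fun u : ℝ => (u : ℂ) ^ (z - 1) *
              ∑' m : Nat.factoredNumbers P, (f (((m : ℕ) : ℝ) * u) : ℂ) := by
        funext u
        exact tsum_mul_left
      rw [heq]
      refine ContinuousOn.aestronglyMeasurable (ContinuousOn.mul ?_ hcont) measurableSet_Ioi
      intro u hu
      exact (continuousAt_ofReal_cpow_const u (z - 1)
        (Or.inr (ne_of_gt (by exact hu : (0:ℝ) < u)))).continuousWithinAt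
    · rw [HasFiniteIntegral]
      calc ∫⁻ u in Ioi (0:ℝ), ‖∑' m : Nat.factoredNumbers P, (u : ℂ) ^ (z - 1) * f ((m : ℕ) * u)‖₊
          ≤ ∫⁻ u in Ioi (0:ℝ), ∑' m : Nat.factoredNumbers P,
              (‖(u : ℂ) ^ (z - 1) * f ((m : ℕ) * u)‖₊ : ENNReal) :=
            lintegral_mono fun u => stmt15_ennnorm_tsum_le
        _ = ∑' m : Nat.factoredNumbers P,
              ∫⁻ u in Ioi (0:ℝ), (‖(u : ℂ) ^ (z - 1) * f ((m : ℕ) * u)‖₊ : ENNReal) :=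
            lintegral_tsum fun m => AEStronglyMeasurable.enorm (hInt m).aestronglyMeasurable
        _ = ∑' m : Nat.factoredNumbers P,
              ENNReal.ofReal (∫ u in Ioi (0:ℝ), ‖(u : ℂ) ^ (z - 1) * f ((m : ℕ) * u)‖) :=
            tsum_congr fun m => (ofReal_integral_norm_eq_lintegral_enorm (hInt m)).symm
        _ = ENNReal.ofReal (∑' m : Nat.factoredNumbers P,
              ∫ u in Ioi (0:ℝ), ‖(u : ℂ) ^ (z - 1) * f ((m : ℕ) * u)‖) :=
            (ENNReal.ofReal_tsum_of_nonneg
              (fun m => integral_nonneg fun u => norm_nonneg _) hIntNormSum).symm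
        _ < ⊤ := ENNReal.ofReal_lt_top
  refine ⟨part1, ?_, ?_, ?_⟩
  · exact hT.congr_fun (fun u hu => (hEq1 u hu).symm) measurableSet_Ioi
  · have := hMC
    rw [MellinConvergent] at this
    exact this.congr_fun (fun u hu => (hEq2 u hu).symm) measurableSet_Ioi
  · rw [setIntegral_congr_fun measurableSet_Ioi hEq1, hmain]
    congr 1
    rw [mellin]
    refine setIntegral_congr_fun measurableSet_Ioi fun u hu => ?_
    exact (hEq2 u hu).symm
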